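/- Let V be a p-dimensional vector space over a field F of characteristic p with |F| ≥ p^2, with basis v_0,...,v_{p-1}. Let x ∈ gl(V) be the cyclic shift x(v_i) = v_{i+1 mod p}, let K = span{x} (an abelian Lie algebra acting on V), and L = K ⋉ V. Choose α, β ∈ F \ {0} with α ≠ γβ for all γ in the prime field F_p. Then the linear map δ : L → L given by δ(x) = αx and δ(v_i) = (β + (i+1)α)v_i is a non-singular (bijective) derivation of L. -/

import Mathlib

/-- The cyclic shift endomorphism `x` of `V = F^p`, sending the basis vector `v_i`
to `v_{i+1 mod p}`; concretely `(shift v) j = v (j-1)`. -/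
def cycShift (F : Type*) [Field F] (p : ℕ) [NeZero p] : (Fin p → F) →ₗ[F] (Fin p → F) :=
  LinearMap.funLeft F F (fun j => j - 1)

/-- The bracket of the semidirect sum `L = K ⋉ V`, `K = span{x}` with `x` the cyclic
shift: `[(a·x, v), (b·x, w)] = (0, a·x(w) - b·x(v))`. An element `(a, v) : F × (Fin p → F)`
represents `a·x + v ∈ L`. -/
def cycBracket (F : Type*) [Field F] (p : ℕ) [NeZero p] :
    (F × (Fin p → F)) → (F × (Fin p → F)) → (F × (Fin p → F)) :=
  fun u w => (0, u.1 • cycShift F p w.2 - w.1 • cycShift F p u.2)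

/-- The linear map `δ : L → L`, `δ(x) = α·x` and `δ(v_i) = (β + (i+1)·α)·v_i`. -/
def cycDelta (F : Type*) [Field F] (p : ℕ) [NeZero p] (α β : F) :
    Module.End F (F × (Fin p → F)) :=
  LinearMap.prodMap (α • LinearMap.id)
    (LinearMap.pi fun j : Fin p =>
      (β + (((j : ℕ) + 1 : ℕ) : F) * α) • LinearMap.proj j)

/-- Let `V` be a `p`-dimensional vector space over a field `F` of characteristic `p`
with `|F| ≥ p²`, `x` the cyclic shift, `K = span{x}`, `L = K ⋉ V`. If `α, β ≠ 0` and
`α ≠ γ·β` for every `γ` in the prime field, then `δ` given by `δ(x) = α·x`,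
`δ(v_i) = (β + (i+1)α)·v_i` is a non-singular (bijective) derivation of `L`. -/
lemma aux_coeff_ne (F : Type*) [Field F] (p : ℕ) [hp : Fact p.Prime] [CharP F p]
    (α β : F) (hβ : β ≠ 0) (hαβ : ∀ γ : ℕ, α ≠ (γ : F) * β) (n : ℕ) :
    β + (n : F) * α ≠ 0 := by
  intro h
  have hp2 : 2 ≤ p := hp.out.two_le
  by_cases hn : (n : F) = 0
  · rw [hn, zero_mul, add_zero] at h; exact hβ h
  · set φ := ZMod.castHom (dvd_refl p) F with hφ
    have hx : φ (n : ZMod p) = (n : F) := map_natCast φ n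
    have hz : (n : ZMod p) ≠ 0 := by
      intro h0; apply hn; rw [← hx, h0, map_zero]
    have hfF : (n : F) ^ (p - 1) = 1 := by
      rw [← hx, ← map_pow, ZMod.pow_card_sub_one_eq_one hz, map_one]
    have hinv : (n : F) ^ (p - 2) = (n : F)⁻¹ := by
      field_simp
      rw [← pow_succ]
      have h21 : p - 2 + 1 = p - 1 := by omega
      rw [h21, hfF]
    apply hαβ ((p - 1) * n ^ (p - 2))
    have hp1 : ((p - 1 : ℕ) : F) = -1 := by
      have h1 : ((p - 1 : ℕ) : F) + 1 = 0 := by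
        have h2 : ((p - 1 : ℕ) : F) + 1 = ((p - 1 + 1 : ℕ) : F) := by push_cast; ring
        have h3 : p - 1 + 1 = p := by omega
        rw [h2, h3, CharP.cast_eq_zero]
      linear_combination h1
    rw [Nat.cast_mul, Nat.cast_pow, hp1, hinv]
    field_simp
    linear_combination h

lemma aux_mod_cast (F : Type*) [Field F] (p : ℕ) [NeZero p] [CharP F p] (a : ℕ) :
    ((a % p : ℕ) : F) = (a : F) := by
  conv_rhs => rw [← Nat.div_add_mod a p]
  push_cast
  simp [CharP.cast_eq_zero]

lemma aux_sub_one_cast (F : Type*) [Field F] (p : ℕ) [hp : Fact p.Prime] [CharP F p] (j : Fin p) :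
    ((((j - 1 : Fin p) : ℕ) + 1 : ℕ) : F) = ((j : ℕ) : F) := by
  have hp2 : 2 ≤ p := hp.out.two_le
  have h1 : ((j - 1 : Fin p) : ℕ) = (p - 1 + (j : ℕ)) % p := by
    rw [Fin.sub_def]
    simp [Fin.val_one', Nat.mod_eq_of_lt (by omega : 1 < p)]
  rw [h1]
  have := aux_mod_cast F p (p - 1 + (j : ℕ))
  push_cast at this ⊢
  rw [this]
  have hp1 : ((p - 1 : ℕ) : F) = -1 := by
    have h2 : ((p - 1 : ℕ) : F) + 1 = ((p - 1 + 1 : ℕ) : F) := by push_cast; ring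
    have h3 : p - 1 + 1 = p := by omega
    have h4 : ((p - 1 : ℕ) : F) + 1 = 0 := by rw [h2, h3, CharP.cast_eq_zero]
    linear_combination h4
  rw [hp1]; ring

lemma cycDelta_apply (F : Type*) [Field F] (p : ℕ) [NeZero p] (α β : F)
    (u : F × (Fin p → F)) :
    cycDelta F p α β u =
      (α * u.1, fun j : Fin p => (β + (((j : ℕ) + 1 : ℕ) : F) * α) * u.2 j) := by
  simp [cycDelta, LinearMap.prodMap, LinearMap.pi]

theorem stmt13 (F : Type*) [Field F] (p : ℕ) [hp : Fact p.Prime] [NeZero p] [CharP F p]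
    (hF : Nat.card F = 0 ∨ p ^ 2 ≤ Nat.card F)
    (α β : F) (hα : α ≠ 0) (hβ : β ≠ 0)
    (hαβ : ∀ γ : ℕ, α ≠ (γ : F) * β) :
    Function.Bijective (cycDelta F p α β) ∧
    ∀ u w : F × (Fin p → F),
      cycDelta F p α β (cycBracket F p u w) =
        cycBracket F p (cycDelta F p α β u) w +
        cycBracket F p u (cycDelta F p α β w) := by

  have hc : ∀ j : Fin p, β + (((j : ℕ) + 1 : ℕ) : F) * α ≠ 0 := fun j =>
    aux_coeff_ne F p α β hβ hαβ ((j : ℕ) + 1)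
  constructor
  · rw [Function.bijective_iff_has_inverse]
    refine ⟨fun u => (α⁻¹ * u.1, fun j : Fin p => (β + (((j : ℕ) + 1 : ℕ) : F) * α)⁻¹ * u.2 j), ?_, ?_⟩
    · intro u
      rw [cycDelta_apply]
      ext
      · simp; field_simp
      · rename_i x
        have h := hc x
        push_cast at h
        simp
        field_simp
    · intro u
      rw [cycDelta_apply]
      ext
      · simp; field_simp
      · rename_i x
        have h := hc x
        push_cast at h
        simp
        field_simp
  · intro u w
    rw [cycDelta_apply, cycDelta_apply, cycDelta_apply]
    simp only [cycBracket, cycShift, LinearMap.funLeft_apply, Prod.mk_add_mk]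
    ext
    · simp
    · rename_i j
      simp only [Pi.sub_apply, Pi.smul_apply, smul_eq_mul, Pi.add_apply,
        LinearMap.funLeft_apply]
      have h1 := aux_sub_one_cast F p j
      push_cast at h1 ⊢
      rw [h1]
      ring
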